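/- Let Ω be a finite probability space with binary random variables Ŷ, Y, S : Ω → {0,1}, with all events (S=s, Y=y) of positive probability, and suppose Ŷ satisfies equalized odds with respect to Y and S. If P(Y=0 | S=0) ≠ P(Y=0 | S=1) and P(Ŷ=1 | S=1, Y=0) ≠ P(Ŷ=1 | S=1, Y=1), then there exists an attack a : {0,1} → {0,1} whose balanced accuracy ½(P(a∘Ŷ=0 | S=0) + P(a∘Ŷ=1 | S=1)) is strictly greater than ½. -/

import Mathlib

open scoped Classical
noncomputable section

/-- Probability of an event under weight function `p` on a finite sample space. -/
def Pr {Omega : Type*} [Fintype Omega] (p : Omega → ℝ) (A : Omega → Prop) : ℝ :=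
  ∑ ω, if A ω then p ω else 0

/-- Conditional probability `P(A | B)`. -/
def cPr {Omega : Type*} [Fintype Omega] (p : Omega → ℝ) (A B : Omega → Prop) : ℝ :=
  Pr p (fun ω => A ω ∧ B ω) / Pr p B

lemma Pr_congr {Omega : Type*} [Fintype Omega] (p : Omega → ℝ) {A B : Omega → Prop}
    (h : ∀ ω, A ω ↔ B ω) : Pr p A = Pr p B := by
  unfold Pr
  exact Finset.sum_congr rfl fun ω _ => by simp [h ω]

lemma Pr_mono {Omega : Type*} [Fintype Omega] (p : Omega → ℝ) (hp : ∀ ω, 0 ≤ p ω)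
    {A B : Omega → Prop} (h : ∀ ω, A ω → B ω) : Pr p A ≤ Pr p B := by
  unfold Pr
  apply Finset.sum_le_sum
  intro ω _
  by_cases hA : A ω
  · simp [hA, h ω hA]
  · simp only [hA, if_false]
    split
    · exact hp ω
    · exact le_rfl

lemma Pr_split {Omega : Type*} [Fintype Omega] (p : Omega → ℝ)
    (C : Omega → Prop) (X : Omega → Fin 2) :
    Pr p C = Pr p (fun ω => C ω ∧ X ω = 0) + Pr p (fun ω => C ω ∧ X ω = 1) := by
  unfold Pr
  rw [← Finset.sum_add_distrib]
  apply Finset.sum_congr rfl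
  intro ω _
  rcases (by decide : ∀ x : Fin 2, x = 0 ∨ x = 1) (X ω) with h | h <;>
    by_cases hC : C ω <;> simp [h, hC]

theorem stmt_12 {Omega : Type*} [Fintype Omega] (p : Omega → ℝ)
    (hp : ∀ ω, 0 ≤ p ω) (hsum : ∑ ω, p ω = 1)
    (Yh Y S : Omega → Fin 2)
    (hpos : ∀ s y : Fin 2, 0 < Pr p (fun ω => S ω = s ∧ Y ω = y))
    (heo : ∀ yh y : Fin 2,
        cPr p (fun ω => Yh ω = yh) (fun ω => S ω = 0 ∧ Y ω = y)
          = cPr p (fun ω => Yh ω = yh) (fun ω => S ω = 1 ∧ Y ω = y))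
    (hY : cPr p (fun ω => Y ω = 0) (fun ω => S ω = 0)
        ≠ cPr p (fun ω => Y ω = 0) (fun ω => S ω = 1))
    (hYh : cPr p (fun ω => Yh ω = 1) (fun ω => S ω = 1 ∧ Y ω = 0)
        ≠ cPr p (fun ω => Yh ω = 1) (fun ω => S ω = 1 ∧ Y ω = 1)) :
    ∃ a : Fin 2 → Fin 2,
      1 / 2 < (cPr p (fun ω => a (Yh ω) = 0) (fun ω => S ω = 0)
        + cPr p (fun ω => a (Yh ω) = 1) (fun ω => S ω = 1)) / 2 := by
  -- Positivity of marginals P(S = s)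
  have hSpos : ∀ s : Fin 2, 0 < Pr p (fun ω => S ω = s) := by
    intro s
    exact lt_of_lt_of_le (hpos s 0) (Pr_mono p hp fun ω h => h.1)
  -- conditional prob of Y given S
  set u : Fin 2 → ℝ := fun s => cPr p (fun ω => Y ω = 0) (fun ω => S ω = s) with hu
  set v : Fin 2 → ℝ := fun s => cPr p (fun ω => Y ω = 1) (fun ω => S ω = s) with hv
  have huv : ∀ s, u s + v s = 1 := by
    intro s
    have hsplit := Pr_split p (fun ω => S ω = s) Y
    simp only [hu, hv, cPr]
    rw [← add_div]
    rw [show Pr p (fun ω => Y ω = 0 ∧ S ω = s) + Pr p (fun ω => Y ω = 1 ∧ S ω = s)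
        = Pr p (fun ω => S ω = s) by
      rw [Pr_congr p (A := fun ω => Y ω = 0 ∧ S ω = s) (fun ω => and_comm),
        Pr_congr p (A := fun ω => Y ω = 1 ∧ S ω = s) (fun ω => and_comm)]
      exact hsplit.symm]
    exact div_self (hSpos s).ne'
  set r : Fin 2 → ℝ := fun y => cPr p (fun ω => Yh ω = 1) (fun ω => S ω = 1 ∧ Y ω = y) with hr
  have hreo : ∀ s y : Fin 2, cPr p (fun ω => Yh ω = 1) (fun ω => S ω = s ∧ Y ω = y) = r y := by
    intro s y
    rcases (by decide : ∀ x : Fin 2, x = 0 ∨ x = 1) s with h | h <;> subst h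
    · exact heo 1 y
    · rfl
  -- chain rule
  have hchain : ∀ s y : Fin 2,
      Pr p (fun ω => Yh ω = 1 ∧ S ω = s ∧ Y ω = y)
        = r y * Pr p (fun ω => S ω = s ∧ Y ω = y) := by
    intro s y
    rw [← hreo s y]
    simp only [cPr]
    rw [div_mul_cancel₀]
    exact (hpos s y).ne'
  set t : Fin 2 → ℝ := fun s => cPr p (fun ω => Yh ω = 1) (fun ω => S ω = s) with ht
  have hts : ∀ s : Fin 2, t s = r 0 * u s + r 1 * v s := by
    intro s
    have hsplit := Pr_split p (fun ω => Yh ω = 1 ∧ S ω = s) Y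
    have e0 : Pr p (fun ω => (Yh ω = 1 ∧ S ω = s) ∧ Y ω = 0)
        = Pr p (fun ω => Yh ω = 1 ∧ S ω = s ∧ Y ω = 0) := Pr_congr p (fun ω => by tauto)
    have e1 : Pr p (fun ω => (Yh ω = 1 ∧ S ω = s) ∧ Y ω = 1)
        = Pr p (fun ω => Yh ω = 1 ∧ S ω = s ∧ Y ω = 1) := Pr_congr p (fun ω => by tauto)
    have : t s = (r 0 * Pr p (fun ω => S ω = s ∧ Y ω = 0)
        + r 1 * Pr p (fun ω => S ω = s ∧ Y ω = 1)) / Pr p (fun ω => S ω = s) := by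
      simp only [ht, cPr]
      rw [hsplit, e0, e1, hchain s 0, hchain s 1]
    rw [this, add_div, mul_div_assoc, mul_div_assoc]
    simp only [hu, hv, cPr]
    congr 2
    · exact congrArg (· / _) (Pr_congr p fun ω => by tauto)
    · exact congrArg (· / _) (Pr_congr p fun ω => by tauto)
  -- complements
  have hcompl : ∀ s : Fin 2, cPr p (fun ω => Yh ω = 0) (fun ω => S ω = s) = 1 - t s := by
    intro s
    have hsplit := Pr_split p (fun ω => S ω = s) Yh
    have e0 : Pr p (fun ω => S ω = s ∧ Yh ω = 0)
        = Pr p (fun ω => Yh ω = 0 ∧ S ω = s) := Pr_congr p (fun ω => and_comm)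
    have e1 : Pr p (fun ω => S ω = s ∧ Yh ω = 1)
        = Pr p (fun ω => Yh ω = 1 ∧ S ω = s) := Pr_congr p (fun ω => and_comm)
    have key : Pr p (fun ω => Yh ω = 0 ∧ S ω = s)
        = Pr p (fun ω => S ω = s) - Pr p (fun ω => Yh ω = 1 ∧ S ω = s) := by
      rw [hsplit, e0, e1]; ring
    simp only [ht, cPr]
    rw [key, sub_div, div_self (hSpos s).ne']
  -- difference
  have hdiff : t 1 - t 0 = (u 1 - u 0) * (r 0 - r 1) := by
    have h0 := hts 0
    have h1 := hts 1
    have hv0 : v 0 = 1 - u 0 := by linarith [huv 0]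
    have hv1 : v 1 = 1 - u 1 := by linarith [huv 1]
    rw [h0, h1, hv0, hv1]; ring
  have hne : t 1 - t 0 ≠ 0 := by
    rw [hdiff]
    exact mul_ne_zero (sub_ne_zero.mpr (Ne.symm hY)) (sub_ne_zero.mpr hYh)
  rcases lt_or_gt_of_ne (sub_ne_zero.mp hne |>.symm) with hlt | hlt
  · -- t 0 < t 1 : identity attack
    refine ⟨id, ?_⟩
    have e0 : cPr p (fun ω => id (Yh ω) = 0) (fun ω => S ω = 0)
        = cPr p (fun ω => Yh ω = 0) (fun ω => S ω = 0) := rfl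
    have e1 : cPr p (fun ω => id (Yh ω) = 1) (fun ω => S ω = 1)
        = cPr p (fun ω => Yh ω = 1) (fun ω => S ω = 1) := rfl
    rw [e0, e1, hcompl 0]
    show (1:ℝ)/2 < (1 - t 0 + t 1)/2
    linarith
  · -- t 1 < t 0 : negation attack
    refine ⟨fun x => if x = 0 then 1 else 0, ?_⟩
    have key : ∀ x : Fin 2, ((if x = 0 then (1:Fin 2) else 0) = 0 ↔ x = 1)
        ∧ ((if x = 0 then (1:Fin 2) else 0) = 1 ↔ x = 0) := by decide
    have e0 : cPr p (fun ω => (if Yh ω = 0 then (1:Fin 2) else 0) = 0) (fun ω => S ω = 0)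
        = t 0 := by
      simp only [ht, cPr]
      congr 1
      exact Pr_congr p fun ω => and_congr_left_iff.mpr fun _ => (key (Yh ω)).1
    have e1 : cPr p (fun ω => (if Yh ω = 0 then (1:Fin 2) else 0) = 1) (fun ω => S ω = 1)
        = cPr p (fun ω => Yh ω = 0) (fun ω => S ω = 1) := by
      simp only [cPr]
      congr 1
      exact Pr_congr p fun ω => and_congr_left_iff.mpr fun _ => (key (Yh ω)).2
    rw [e0, e1, hcompl 1]
    linarith
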